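/- Let $U$, $Z_1$, $Z_2$ be mutually independent random variables taking values in standard Borel spaces, with $Z_1$ and $Z_2$ equal in distribution. If $f$ is a measurable map into a standard Borel space such that $f(U, Z_1) = f(U, Z_2)$ almost surely, then there exists a measurable map $h$ such that $f(U, Z_1) = h(U)$ almost surely. -/

import Mathlib

open MeasureTheory

/-- **Reduction of functional dependence.** If `U, Z₁, Z₂` are mutually independent
random variables taking values in standard Borel spaces, `Z₁` and `Z₂` are equal in
distribution, and `f (U, Z₁) = f (U, Z₂)` almost surely for a measurable map `f` into a
standard Borel space, then there is a measurable map `h` with `f (U, Z₁) = h U` a.s. -/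
theorem exists_measurable_reduction
    {Ω α β γ : Type*} [MeasurableSpace Ω]
    [MeasurableSpace α] [StandardBorelSpace α]
    [MeasurableSpace β] [StandardBorelSpace β]
    [MeasurableSpace γ] [StandardBorelSpace γ]
    (μ : Measure Ω) [IsProbabilityMeasure μ]
    (U : Ω → α) (Z₁ Z₂ : Ω → β) (f : α → β → γ)
    (hU : Measurable U) (hZ₁ : Measurable Z₁) (hZ₂ : Measurable Z₂)
    (hf : Measurable (Function.uncurry f))
    (hindep : ∀ (A : Set α) (B C : Set β), MeasurableSet A → MeasurableSet B →
      MeasurableSet C →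
      μ (U ⁻¹' A ∩ Z₁ ⁻¹' B ∩ Z₂ ⁻¹' C) = μ (U ⁻¹' A) * μ (Z₁ ⁻¹' B) * μ (Z₂ ⁻¹' C))
    (hdist : Measure.map Z₁ μ = Measure.map Z₂ μ)
    (heq : ∀ᵐ ω ∂μ, f (U ω) (Z₁ ω) = f (U ω) (Z₂ ω)) :
    ∃ h : α → γ, Measurable h ∧ ∀ᵐ ω ∂μ, f (U ω) (Z₁ ω) = h (U ω) := by
  obtain ⟨e, he⟩ := exists_measurableEmbedding_real γ
  have hΩ : Nonempty Ω := by
    by_contra h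
    rw [not_nonempty_iff] at h
    have h0 : μ Set.univ = 0 := by
      rw [Set.univ_eq_empty_iff.2 h]; simp
    rw [measure_univ] at h0; exact one_ne_zero h0
  obtain ⟨ω₀⟩ := hΩ
  haveI hγ : Nonempty γ := ⟨f (U ω₀) (Z₁ ω₀)⟩
  obtain ⟨r, hr, hre⟩ := he.exists_measurable_extend measurable_id (fun _ => hγ)
  have hrid : ∀ x : γ, r (e x) = x := fun x => congrFun hre x
  set ν : Measure α := μ.map U with hν
  set ρ : Measure β := μ.map Z₁ with hρ
  haveI : IsProbabilityMeasure ν := Measure.isProbabilityMeasure_map hU.aemeasurable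
  haveI : IsProbabilityMeasure ρ := Measure.isProbabilityMeasure_map hZ₁.aemeasurable
  -- the candidate function
  set h : α → γ := fun u => r (∫ z, e (f u z) ∂ρ) with hh
  have hFm : StronglyMeasurable (fun p : α × β => e (f p.1 p.2)) :=
    (he.measurable.comp hf).stronglyMeasurable
  have hInt : StronglyMeasurable (fun u => ∫ z, e (f u z) ∂ρ) :=
    hFm.integral_prod_right'
  have hhm : Measurable h := hr.comp hInt.measurable
  refine ⟨h, hhm, ?_⟩
  -- values of ρ
  have hρB : ∀ B : Set β, MeasurableSet B → ρ B = μ (Z₁ ⁻¹' B) := fun B hB => by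
    rw [hρ, Measure.map_apply hZ₁ hB]
  have hρC : ∀ C : Set β, MeasurableSet C → ρ C = μ (Z₂ ⁻¹' C) := fun C hC => by
    rw [hdist, Measure.map_apply hZ₂ hC]
  have hνA : ∀ A : Set α, MeasurableSet A → ν A = μ (U ⁻¹' A) := fun A hA => by
    rw [hν, Measure.map_apply hU hA]
  -- law of the pair (U, Z₁)
  have hZ12 : Measurable (fun ω => (Z₁ ω, Z₂ ω)) := hZ₁.prodMk hZ₂
  have hP : Measurable (fun ω => (U ω, Z₁ ω)) := hU.prodMk hZ₁
  have hT : Measurable (fun ω => (U ω, (Z₁ ω, Z₂ ω))) := hU.prodMk hZ12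
  have pairLaw : ν.prod ρ = μ.map (fun ω => (U ω, Z₁ ω)) := by
    refine Measure.prod_eq (fun s t hs ht => ?_)
    rw [Measure.map_apply hP (hs.prod ht)]
    have : (fun ω => (U ω, Z₁ ω)) ⁻¹' (s ×ˢ t) = U ⁻¹' s ∩ Z₁ ⁻¹' t := rfl
    rw [this, hνA s hs, hρB t ht]
    have := hindep s t Set.univ hs ht MeasurableSet.univ
    simpa using this
  -- law of the triple
  have tripleLaw : ν.prod (ρ.prod ρ) = μ.map (fun ω => (U ω, (Z₁ ω, Z₂ ω))) := by
    refine Measure.prod_eq (fun s t hs ht => ?_)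
    -- compare two measures on β × β
    set κ₁ : Measure (β × β) := (μ.restrict (U ⁻¹' s)).map (fun ω => (Z₁ ω, Z₂ ω)) with hκ₁
    set κ₂ : Measure (β × β) := (μ (U ⁻¹' s)) • (ρ.prod ρ) with hκ₂
    haveI : IsFiniteMeasure κ₁ := by
      constructor
      rw [hκ₁, Measure.map_apply hZ12 MeasurableSet.univ]
      exact lt_of_le_of_lt (le_trans (measure_mono (Set.subset_univ _))
        (Measure.restrict_le_self _)) (measure_lt_top μ _)
    haveI : IsFiniteMeasure κ₂ := by
      constructor
      rw [hκ₂]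
      simp only [Measure.smul_apply, smul_eq_mul, measure_univ, mul_one]
      exact measure_lt_top μ _
    have hκ : κ₁ = κ₂ := by
      refine ext_of_generate_finite _ generateFrom_prod.symm isPiSystem_prod ?_ ?_
      · rintro _ ⟨B, hB, C, hC, rfl⟩
        simp only [Set.mem_setOf_eq] at hB hC
        rw [hκ₁, Measure.map_apply hZ12 (hB.prod hC)]
        have hpre : (fun ω => (Z₁ ω, Z₂ ω)) ⁻¹' (B ×ˢ C) = Z₁ ⁻¹' B ∩ Z₂ ⁻¹' C := rfl
        rw [hpre, Measure.restrict_apply (hZ₁ hB |>.inter (hZ₂ hC))]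
        have : Z₁ ⁻¹' B ∩ Z₂ ⁻¹' C ∩ U ⁻¹' s = U ⁻¹' s ∩ Z₁ ⁻¹' B ∩ Z₂ ⁻¹' C := by
          rw [Set.inter_comm, Set.inter_assoc]
        rw [this, hindep s B C hs hB hC, hκ₂]
        simp only [Measure.smul_apply, smul_eq_mul]
        rw [Measure.prod_prod, hρB B hB, hρC C hC, mul_assoc]
      · rw [hκ₁, Measure.map_apply hZ12 MeasurableSet.univ, hκ₂]
        simp [Measure.restrict_apply MeasurableSet.univ]
    rw [Measure.map_apply hT (hs.prod ht)]
    have hpre : (fun ω => (U ω, (Z₁ ω, Z₂ ω))) ⁻¹' (s ×ˢ t)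
        = (fun ω => (Z₁ ω, Z₂ ω)) ⁻¹' t ∩ U ⁻¹' s := by
      ext ω; simp [Set.mem_prod, and_comm]
    rw [hpre, ← Measure.restrict_apply (hZ12 ht), ← Measure.map_apply hZ12 ht, ← hκ₁, hκ,
      hκ₂, hνA s hs]
    simp [mul_comm]
  -- transfer heq to the product measure
  have hDm : MeasurableSet {p : α × (β × β) | e (f p.1 p.2.1) = e (f p.1 p.2.2)} := by
    refine measurableSet_eq_fun ?_ ?_
    · exact he.measurable.comp (hf.comp (measurable_fst.prodMk
        (measurable_fst.comp measurable_snd)))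
    · exact he.measurable.comp (hf.comp (measurable_fst.prodMk
        (measurable_snd.comp measurable_snd)))
  have hae : ∀ᵐ p ∂(ν.prod (ρ.prod ρ)), e (f p.1 p.2.1) = e (f p.1 p.2.2) := by
    rw [tripleLaw]
    rw [ae_map_iff hT.aemeasurable hDm]
    filter_upwards [heq] with ω hω
    simp [hω]
  have hae2 : ∀ᵐ u ∂ν, ∀ᵐ q ∂(ρ.prod ρ), e (f u q.1) = e (f u q.2) :=
    Measure.ae_ae_of_ae_prod hae
  -- key: for ν-a.e. u, f u · is ρ-a.e. equal to h u
  have key : ∀ᵐ u ∂ν, ∀ᵐ z ∂ρ, f u z = h u := by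
    filter_upwards [hae2] with u hu
    have hu' : ∀ᵐ z₁ ∂ρ, ∀ᵐ z₂ ∂ρ, e (f u z₁) = e (f u z₂) :=
      Measure.ae_ae_of_ae_prod hu
    filter_upwards [hu'] with z₁ hz₁
    have hint : ∫ z, e (f u z) ∂ρ = e (f u z₁) := by
      rw [integral_congr_ae (g := fun _ => e (f u z₁)) ?_]
      · simp
      · filter_upwards [hz₁] with z₂ hz₂ using hz₂.symm
    rw [hh]
    simp only [hint, hrid]
  -- conclude
  have hGm : MeasurableSet {p : α × β | e (f p.1 p.2) = e (h p.1)} := by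
    refine measurableSet_eq_fun ?_ ?_
    · exact he.measurable.comp hf
    · exact he.measurable.comp (hhm.comp measurable_fst)
  have hGnull : (ν.prod ρ) {p : α × β | e (f p.1 p.2) = e (h p.1)}ᶜ = 0 := by
    rw [Measure.prod_apply hGm.compl]
    have hz : ∀ᵐ u ∂ν, ρ (Prod.mk u ⁻¹' {p : α × β | e (f p.1 p.2) = e (h p.1)}ᶜ) = 0 := by
      filter_upwards [key] with u hu
      have : ∀ᵐ z ∂ρ, z ∉ Prod.mk u ⁻¹' {p : α × β | e (f p.1 p.2) = e (h p.1)}ᶜ := by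
        filter_upwards [hu] with z hz
        simp [hz]
      rw [ae_iff] at this
      simpa [Set.compl_setOf] using this
    calc ∫⁻ u, ρ (Prod.mk u ⁻¹' {p : α × β | e (f p.1 p.2) = e (h p.1)}ᶜ) ∂ν
        = ∫⁻ _, 0 ∂ν := lintegral_congr_ae hz
      _ = 0 := lintegral_zero
  have : μ ((fun ω => (U ω, Z₁ ω)) ⁻¹' {p : α × β | e (f p.1 p.2) = e (h p.1)}ᶜ) = 0 := by
    rw [← Measure.map_apply hP hGm.compl, ← pairLaw]
    exact hGnull
  have hfin : ∀ᵐ ω ∂μ, e (f (U ω) (Z₁ ω)) = e (h (U ω)) := by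
    rw [ae_iff]
    have hset : {ω | ¬ e (f (U ω) (Z₁ ω)) = e (h (U ω))}
        = (fun ω => (U ω, Z₁ ω)) ⁻¹' {p : α × β | e (f p.1 p.2) = e (h p.1)}ᶜ := by
      ext ω; simp
    rw [hset]; exact this
  filter_upwards [hfin] with ω hω
  exact he.injective hω
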